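/- (Lemma 3, variants of a composed FSMv.) Let A1 and A2 be FSMv's over alphabets Σ1, Σ2 with disjoint variable sets Var1, Var2, composed with a composition predicate ρ12 into A1 ∥ A2. Let π be a valid configuration of A1 ∥ A2 and write π = π1 + π2 where πi is the (valid) restriction of π to Vari. Then L((A1 ∥ A2)↓π) = L(A1↓π1) ∥ L(A2↓π2), where the right-hand side is the asynchronous shuffle of the two variant languages with respect to the alphabets Σ1 and Σ2. -/

import Mathlib

attribute [local instance] Classical.propDecidable

/-- A configuration over a set `S` of variables: an assignment of a value in
`Dm x` to every variable `x ∈ S`. -/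
def Config {V : Type} (Dm : V → Type) (S : Set V) : Type :=
  ∀ x : V, x ∈ S → Dm x

/-- The restriction of a configuration over `S ∪ T` to `S`. -/
def Config.restrictL {V : Type} {Dm : V → Type} {S T : Set V}
    (π : Config Dm (S ∪ T)) : Config Dm S :=
  fun x hx => π x (Set.mem_union_left T hx)

/-- The restriction of a configuration over `S ∪ T` to `T`. -/
def Config.restrictR {V : Type} {Dm : V → Type} {S T : Set V}
    (π : Config Dm (S ∪ T)) : Config Dm T :=
  fun x hx => π x (Set.mem_union_right S hx)

/-- `π1 + π2`: the configuration over `S ∪ T` agreeing with `π1` on `S` and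
with `π2` on `T` (unique when `S` and `T` are disjoint). -/
noncomputable def Config.plus {V : Type} {Dm : V → Type} {S T : Set V}
    (π1 : Config Dm S) (π2 : Config Dm T) : Config Dm (S ∪ T) :=
  fun x hx =>
    if h : x ∈ S then π1 x h
    else π2 x (((Set.mem_union x S T).mp hx).resolve_left h)

/-- A finite state machine with variability (FSMv): states `Q` with initial state
`q0`, event alphabet `alph ⊆ Ev`, variable set `Vars ⊆ V`, guarded transitions `E`
(each transition `(s, g, a, s')` has its event `a` in the alphabet), and a global
predicate `ρ` on configurations; a configuration `π` is *valid* if `ρ π` holds. -/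
structure FSMv (V : Type) (Dm : V → Type) (Ev : Type) : Type 1 where
  Q : Type
  q0 : Q
  alph : Set Ev
  Vars : Set V
  E : Set (Q × (Config Dm Vars → Prop) × Ev × Q)
  E_alph : ∀ s g a s', (s, g, a, s') ∈ E → a ∈ alph
  ρ : Config Dm Vars → Prop

/-- `A.Reach π w s`: in the variant `A↓π` there is a path from the initial state
to `s` labelled `w`, using only transitions whose guards are satisfied by `π`. -/
inductive FSMv.Reach {V Ev : Type} {Dm : V → Type} (A : FSMv V Dm Ev)
    (π : Config Dm A.Vars) : List Ev → A.Q → Prop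
  | nil : FSMv.Reach A π [] A.q0
  | snoc {w : List Ev} {s : A.Q} {g : Config Dm A.Vars → Prop} {a : Ev} {s' : A.Q} :
      FSMv.Reach A π w s → (s, g, a, s') ∈ A.E → g π → FSMv.Reach A π (w ++ [a]) s'

/-- `A.Lang π = L(A↓π)`: the language of the variant of `A` under configuration `π`. -/
def FSMv.Lang {V Ev : Type} {Dm : V → Type} (A : FSMv V Dm Ev)
    (π : Config Dm A.Vars) : Set (List Ev) :=
  { w | ∃ s, A.Reach π w s }

/-- The parallel composition `A1 ∥ A2` of two FSMv's (over disjoint variable sets)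
with composition predicate `ρ12`: machines synchronize on shared events
`H = Σ1 ∩ Σ2` and move independently on private events; its global predicate
is `ρ12 ∧ ρ1 ∧ ρ2`. -/
def FSMv.par {V Ev : Type} {Dm : V → Type} (A1 A2 : FSMv V Dm Ev)
    (ρ12 : Config Dm (A1.Vars ∪ A2.Vars) → Prop) : FSMv V Dm Ev where
  Q := A1.Q × A2.Q
  q0 := (A1.q0, A2.q0)
  alph := A1.alph ∪ A2.alph
  Vars := A1.Vars ∪ A2.Vars
  E := { t | ∃ (s1 s1' : A1.Q) (s2 s2' : A2.Q) (a : Ev)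
      (g : Config Dm (A1.Vars ∪ A2.Vars) → Prop),
      t = ((s1, s2), g, a, (s1', s2')) ∧
      ((a ∈ A1.alph ∩ A2.alph ∧
          ∃ g1 g2, (s1, g1, a, s1') ∈ A1.E ∧ (s2, g2, a, s2') ∈ A2.E ∧
            g = fun π => g1 π.restrictL ∧ g2 π.restrictR) ∨
       (a ∈ A1.alph \ A2.alph ∧ s2' = s2 ∧
          ∃ g1, (s1, g1, a, s1') ∈ A1.E ∧ g = fun π => g1 π.restrictL) ∨
       (a ∈ A2.alph \ A1.alph ∧ s1' = s1 ∧
          ∃ g2, (s2, g2, a, s2') ∈ A2.E ∧ g = fun π => g2 π.restrictR)) }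
  E_alph := by
    rintro s g a s' ⟨s1, s1', s2, s2', a', g', heq, h⟩
    simp only [Prod.mk.injEq] at heq
    obtain ⟨rfl, rfl, rfl, rfl⟩ := heq
    rcases h with h | h | h
    · exact Set.mem_union_left _ h.1.1
    · exact Set.mem_union_left _ h.1.1
    · exact Set.mem_union_right _ h.1.1
  ρ := fun π => ρ12 π ∧ A1.ρ π.restrictL ∧ A2.ρ π.restrictR

/-- `wordProj S w` is the subword `w↓S` of `w` obtained by deleting all letters not in `S`. -/
noncomputable def wordProj {Ev : Type} (S : Set Ev) (w : List Ev) : List Ev :=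
  w.filter fun a => decide (a ∈ S)

/-- The asynchronous shuffle `u1 ∥ u2` of two words `u1 ∈ Σ1*`, `u2 ∈ Σ2*`:
the set of words `w` over `Σ1 ∪ Σ2` with `w↓Σ1 = u1` and `w↓Σ2 = u2`. -/
def wordShuffle {Ev : Type} (S1 S2 : Set Ev) (u1 u2 : List Ev) : Set (List Ev) :=
  { w | (∀ a ∈ w, a ∈ S1 ∪ S2) ∧ wordProj S1 w = u1 ∧ wordProj S2 w = u2 }

/-- The asynchronous shuffle of two languages `L1 ⊆ Σ1*`, `L2 ⊆ Σ2*`. -/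
def langShuffle {Ev : Type} (S1 S2 : Set Ev) (L1 L2 : Set (List Ev)) : Set (List Ev) :=
  { w | ∃ u1 ∈ L1, ∃ u2 ∈ L2, w ∈ wordShuffle S1 S2 u1 u2 }

lemma FSMv.reach_snoc_inv {V Ev : Type} {Dm : V → Type} (A : FSMv V Dm Ev)
    (π : Config Dm A.Vars) {w : List Ev} {a : Ev} {s' : A.Q}
    (h : A.Reach π (w ++ [a]) s') :
    ∃ s g, A.Reach π w s ∧ (s, g, a, s') ∈ A.E ∧ g π := by
  generalize hw : w ++ [a] = v at h
  cases h with
  | nil => exact absurd hw (by simp)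
  | snoc h1 h2 h3 =>
    obtain ⟨rfl, ha⟩ := List.append_inj' hw rfl
    injection ha with ha _
    subst ha
    exact ⟨_, _, h1, h2, h3⟩

lemma FSMv.reach_nil_inv {V Ev : Type} {Dm : V → Type} (A : FSMv V Dm Ev)
    (π : Config Dm A.Vars) {s : A.Q} (h : A.Reach π [] s) : s = A.q0 := by
  generalize hw : ([] : List Ev) = v at h
  cases h with
  | nil => rfl
  | snoc _ _ _ => exact absurd hw (by simp)

lemma wordProj_append_single {Ev : Type} (S : Set Ev) (w : List Ev) (a : Ev) :
    wordProj S (w ++ [a]) = wordProj S w ++ (if a ∈ S then [a] else []) := by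
  simp only [wordProj, List.filter_append, List.filter]
  split_ifs with h <;> simp [h]

lemma par_reach_forward {V Ev : Type} {Dm : V → Type}
    (A1 A2 : FSMv V Dm Ev) (ρ12 : Config Dm (A1.Vars ∪ A2.Vars) → Prop)
    (π : Config Dm (A1.Vars ∪ A2.Vars)) {w : List Ev} {s : (A1.par A2 ρ12).Q}
    (h : (A1.par A2 ρ12).Reach π w s) :
    (∀ a ∈ w, a ∈ A1.alph ∪ A2.alph) ∧
    A1.Reach π.restrictL (wordProj A1.alph w) s.1 ∧
    A2.Reach π.restrictR (wordProj A2.alph w) s.2 := by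
  induction h with
  | nil => exact ⟨by simp, by simpa [wordProj, FSMv.par] using FSMv.Reach.nil,
      by simpa [wordProj, FSMv.par] using FSMv.Reach.nil⟩
  | @snoc w s g a s' h1 h2 h3 ih =>
    obtain ⟨hmem, hr1, hr2⟩ := ih
    obtain ⟨s1, s1', s2, s2', a', g', heq, hcase⟩ := h2
    cases heq
    rcases hcase with ⟨ha, g1, g2, hE1, hE2, rfl⟩ | ⟨ha, rfl, g1, hE1, rfl⟩ |
        ⟨ha, rfl, g2, hE2, rfl⟩
    · refine ⟨?_, ?_, ?_⟩
      · intro b hb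
        rcases List.mem_append.mp hb with hb | hb
        · exact hmem b hb
        · simp at hb; subst hb; exact Set.mem_union_left _ ha.1
      · rw [wordProj_append_single, if_pos ha.1]
        exact hr1.snoc hE1 h3.1
      · rw [wordProj_append_single, if_pos ha.2]
        exact hr2.snoc hE2 h3.2
    · refine ⟨?_, ?_, ?_⟩
      · intro b hb
        rcases List.mem_append.mp hb with hb | hb
        · exact hmem b hb
        · simp at hb; subst hb; exact Set.mem_union_left _ ha.1
      · rw [wordProj_append_single, if_pos ha.1]
        exact hr1.snoc hE1 h3
      · rw [wordProj_append_single, if_neg ha.2]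
        simpa using hr2
    · refine ⟨?_, ?_, ?_⟩
      · intro b hb
        rcases List.mem_append.mp hb with hb | hb
        · exact hmem b hb
        · simp at hb; subst hb; exact Set.mem_union_right _ ha.1
      · rw [wordProj_append_single, if_neg ha.2]
        simpa using hr1
      · rw [wordProj_append_single, if_pos ha.1]
        exact hr2.snoc hE2 h3

lemma par_reach_backward {V Ev : Type} {Dm : V → Type}
    (A1 A2 : FSMv V Dm Ev) (ρ12 : Config Dm (A1.Vars ∪ A2.Vars) → Prop)
    (π : Config Dm (A1.Vars ∪ A2.Vars)) :
    ∀ (w : List Ev), (∀ a ∈ w, a ∈ A1.alph ∪ A2.alph) →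
    ∀ (s1 : A1.Q) (s2 : A2.Q),
      A1.Reach π.restrictL (wordProj A1.alph w) s1 →
      A2.Reach π.restrictR (wordProj A2.alph w) s2 →
      (A1.par A2 ρ12).Reach π w (s1, s2) := by
  intro w
  induction w using List.reverseRecOn with
  | nil =>
    intro _ s1 s2 h1 h2
    simp only [wordProj, List.filter_nil] at h1 h2
    obtain rfl := FSMv.reach_nil_inv A1 _ h1
    obtain rfl := FSMv.reach_nil_inv A2 _ h2
    exact FSMv.Reach.nil
  | append_singleton w a ih =>
    intro hmem s1 s2 h1 h2
    have hmem' : ∀ b ∈ w, b ∈ A1.alph ∪ A2.alph := fun b hb => hmem b (by simp [hb])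
    have ha : a ∈ A1.alph ∪ A2.alph := hmem a (by simp)
    rw [wordProj_append_single] at h1 h2
    by_cases ha1 : a ∈ A1.alph <;> by_cases ha2 : a ∈ A2.alph
    · rw [if_pos ha1] at h1; rw [if_pos ha2] at h2
      obtain ⟨t1, g1, hr1, hE1, hg1⟩ := A1.reach_snoc_inv _ h1
      obtain ⟨t2, g2, hr2, hE2, hg2⟩ := A2.reach_snoc_inv _ h2
      refine (ih hmem' t1 t2 hr1 hr2).snoc
        (g := fun π => g1 π.restrictL ∧ g2 π.restrictR) ?_ ⟨hg1, hg2⟩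
      exact ⟨t1, s1, t2, s2, a, _, rfl, Or.inl ⟨⟨ha1, ha2⟩, g1, g2, hE1, hE2, rfl⟩⟩
    · rw [if_pos ha1] at h1; rw [if_neg ha2, List.append_nil] at h2
      obtain ⟨t1, g1, hr1, hE1, hg1⟩ := A1.reach_snoc_inv _ h1
      refine (ih hmem' t1 s2 hr1 h2).snoc
        (g := fun π => g1 π.restrictL) ?_ hg1
      exact ⟨t1, s1, s2, s2, a, _, rfl, Or.inr (Or.inl ⟨⟨ha1, ha2⟩, rfl, g1, hE1, rfl⟩)⟩
    · rw [if_neg ha1, List.append_nil] at h1; rw [if_pos ha2] at h2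
      obtain ⟨t2, g2, hr2, hE2, hg2⟩ := A2.reach_snoc_inv _ h2
      refine (ih hmem' s1 t2 h1 hr2).snoc
        (g := fun π => g2 π.restrictR) ?_ hg2
      exact ⟨s1, s1, t2, s2, a, _, rfl, Or.inr (Or.inr ⟨⟨ha2, ha1⟩, rfl, g2, hE2, rfl⟩)⟩
    · exact absurd ha (by simp [ha1, ha2])

/-- **Lemma 3 (variants of a composed FSMv).** For FSMv's `A1`, `A2` over disjoint
variable sets composed via a composition predicate `ρ12`, and a valid configuration
`π = π1 + π2` of `A1 ∥ A2` (where `πi` is the restriction of `π` to `Vari`),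
`L((A1 ∥ A2)↓π) = L(A1↓π1) ∥ L(A2↓π2)`, the asynchronous shuffle taken with
respect to the alphabets `Σ1` of `A1` and `Σ2` of `A2`. -/
theorem lang_of_composed_variant_eq_langShuffle
    {V Ev : Type} {Dm : V → Type} [∀ x, Finite (Dm x)] [∀ x, Nonempty (Dm x)]
    (A1 A2 : FSMv V Dm Ev)
    (hdisj : Disjoint A1.Vars A2.Vars)
    (ρ12 : Config Dm (A1.Vars ∪ A2.Vars) → Prop)
    (π : Config Dm (A1.Vars ∪ A2.Vars))
    (hvalid : (A1.par A2 ρ12).ρ π) :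
    (A1.par A2 ρ12).Lang π =
      langShuffle A1.alph A2.alph (A1.Lang π.restrictL) (A2.Lang π.restrictR) := by
  ext w
  constructor
  · rintro ⟨⟨s1, s2⟩, hs⟩
    obtain ⟨hmem, hr1, hr2⟩ := par_reach_forward A1 A2 ρ12 π hs
    exact ⟨wordProj A1.alph w, ⟨s1, hr1⟩, wordProj A2.alph w, ⟨s2, hr2⟩,
      hmem, rfl, rfl⟩
  · rintro ⟨u1, ⟨s1, hr1⟩, u2, ⟨s2, hr2⟩, hmem, h1, h2⟩
    subst h1; subst h2
    exact ⟨(s1, s2), par_reach_backward A1 A2 ρ12 π w hmem s1 s2 hr1 hr2⟩
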